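/- In the degenerate affine Sergeev algebra A_n, the elements y_p = x_p − Σ_{1 ≤ q < p} (1 + c_p c_q) w_{pq} satisfy the commutation relation w_{pq}·[y_p, y_q] = y_p − y_q + c_p c_q (y_p + y_q) for all p ≠ q. -/

import Mathlib

open Equiv

/- The degenerate affine Sergeev algebra `A_n` is generated by the Sergeev algebra `H_n`
(the crossed product of `S_n` with the Clifford algebra on `c₁,…,c_n`, `c_p² = -1`)
together with pairwise commuting elements `x₁,…,x_n`, subject to the relations
`x_p w_{q,q+1} = w_{q,q+1} x_p` for `p ≠ q,q+1`;
`x_p w_{p,p+1} = w_{p,p+1} x_{p+1} - 1 - c_p c_{p+1}`;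
`x_p c_q = c_q x_p` for `p ≠ q`; and `x_p c_p = -c_p x_p`.
We phrase statements universally: in any ring `A` with elements `π w`, `c p`, `x p`
satisfying these defining relations. -/

variable {A : Type*} [Ring A] {n : ℕ}

/-- `y_p = x_p - Σ_{1 ≤ q < p} (1 + c_p c_q) w_{pq}`. -/
noncomputable def yElt (π : Equiv.Perm (Fin n) →* A) (c : Fin n → A) (x : Fin n → A)
    (p : Fin n) : A :=
  x p - ∑ q ∈ Finset.univ.filter (· < p), (1 + c p * c q) * π (Equiv.swap p q)

lemma filter_lt_succ (k ks : Fin n) (hks : (ks:ℕ) = k+1) :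
    Finset.univ.filter (· < ks) = insert k (Finset.univ.filter (· < k)) := by
  ext r
  simp only [Finset.mem_filter, Finset.mem_insert, Finset.mem_univ, true_and, Fin.lt_def,
    Fin.ext_iff]
  omega

lemma yconj_adj (π : Equiv.Perm (Fin n) →* A) (c : Fin n → A) (x : Fin n → A)
    (hwc : ∀ (w : Equiv.Perm (Fin n)) (p : Fin n), π w * c p = c (w p) * π w)
    (hxw : ∀ p q qs : Fin n, (qs : ℕ) = (q : ℕ) + 1 → p ≠ q → p ≠ qs →
      x p * π (Equiv.swap q qs) = π (Equiv.swap q qs) * x p)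
    (hxw' : ∀ p ps : Fin n, (ps : ℕ) = (p : ℕ) + 1 →
      x p * π (Equiv.swap p ps) = π (Equiv.swap p ps) * x ps - 1 - c p * c ps)
    (k ks : Fin n) (hks : (ks:ℕ) = (k:ℕ)+1) (p : Fin n) :
    π (Equiv.swap k ks) * yElt π c x p
      = yElt π c x (Equiv.swap k ks p) * π (Equiv.swap k ks) := by
  have hkks : k ≠ ks := by
    intro h; rw [h] at hks; omega
  set t : Equiv.Perm (Fin n) := Equiv.swap k ks with ht
  set T : A := π t with hT
  have hTT : T * T = 1 := by rw [hT, ← map_mul, Equiv.swap_mul_self, map_one]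
  have hTTz : ∀ z : A, T * (T * z) = z := fun z => by rw [← mul_assoc, hTT, one_mul]
  have hTk : T * c k = c ks * T := by rw [hT, hwc, Equiv.swap_apply_left]
  have hTks : T * c ks = c k * T := by rw [hT, hwc, Equiv.swap_apply_right]
  have hTr : ∀ r, r ≠ k → r ≠ ks → T * c r = c r * T := fun r h1 h2 => by
    rw [hT, hwc, Equiv.swap_apply_of_ne_of_ne h1 h2]
  have hTkz : ∀ z : A, T * (c k * z) = c ks * (T * z) := fun z => by
    rw [← mul_assoc, hTk, mul_assoc]
  have hTksz : ∀ z : A, T * (c ks * z) = c k * (T * z) := fun z => by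
    rw [← mul_assoc, hTks, mul_assoc]
  have hTrz : ∀ r, r ≠ k → r ≠ ks → ∀ z : A, T * (c r * z) = c r * (T * z) := fun r h1 h2 z => by
    rw [← mul_assoc, hTr r h1 h2, mul_assoc]
  have F2 : T * x k = x ks * T - 1 - c ks * c k := by
    have h := hxw' k ks hks
    have e1 : x k * T * T = x k := by rw [mul_assoc, hTT, mul_one]
    calc T * x k = T * (x k * T * T) := by rw [e1]
      _ = T * ((T * x ks - 1 - c k * c ks) * T) := by rw [h]
      _ = x ks * T - 1 - c ks * c k := by
          simp only [sub_mul, mul_sub, one_mul, mul_one, mul_assoc, hTT, hTTz, hTkz, hTksz]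
  have F3 : T * x ks = x k * T + 1 + c k * c ks := by
    have h := hxw' k ks hks
    rw [h]; noncomm_ring
  have hlt_ne : ∀ r : Fin n, r < k → r ≠ k ∧ r ≠ ks := by
    intro r hr
    constructor
    · exact ne_of_lt hr
    · intro h; rw [h, Fin.lt_def] at hr; omega
  -- swap product identities
  have hswl : ∀ r : Fin n, r ≠ k → r ≠ ks →
      T * π (Equiv.swap k r) = π (Equiv.swap ks r) * T := by
    intro r h1 h2
    rw [hT, ← map_mul, ← map_mul]
    congr 1
    rw [Equiv.mul_swap_eq_swap_mul, ht, Equiv.swap_apply_left,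
      Equiv.swap_apply_of_ne_of_ne h1 h2]
  have hswr : ∀ r : Fin n, r ≠ k → r ≠ ks →
      T * π (Equiv.swap ks r) = π (Equiv.swap k r) * T := by
    intro r h1 h2
    rw [hT, ← map_mul, ← map_mul]
    congr 1
    rw [Equiv.mul_swap_eq_swap_mul, ht, Equiv.swap_apply_right,
      Equiv.swap_apply_of_ne_of_ne h1 h2]
  rcases eq_or_ne p k with rfl | hpk
  · -- p = k
    rw [Equiv.swap_apply_left]
    show T * (x p - ∑ r ∈ Finset.univ.filter (· < p), (1 + c p * c r) * π (Equiv.swap p r))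
      = (x ks - ∑ r ∈ Finset.univ.filter (· < ks), (1 + c ks * c r) * π (Equiv.swap ks r)) * T
    rw [filter_lt_succ p ks hks, Finset.sum_insert (by simp)]
    rw [mul_sub, Finset.mul_sum, sub_mul, add_mul, Finset.sum_mul]
    have hsum : ∀ r ∈ Finset.univ.filter (· < p),
        T * ((1 + c p * c r) * π (Equiv.swap p r))
          = (1 + c ks * c r) * π (Equiv.swap ks r) * T := by
      intro r hr
      rw [Finset.mem_filter] at hr
      obtain ⟨h1, h2⟩ := hlt_ne r hr.2
      simp only [add_mul, one_mul, mul_add, mul_assoc, hswl r h1 h2, hTkz, hTrz r h1 h2]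
    rw [Finset.sum_congr rfl hsum, F2]
    rw [Equiv.swap_comm ks p, ← ht, ← hT, mul_assoc, hTT, mul_one]
    noncomm_ring
  · rcases eq_or_ne p ks with rfl | hpks
    · -- p = ks
      rw [Equiv.swap_apply_right]
      show T * (x p - ∑ r ∈ Finset.univ.filter (· < p), (1 + c p * c r) * π (Equiv.swap p r))
        = (x k - ∑ r ∈ Finset.univ.filter (· < k), (1 + c k * c r) * π (Equiv.swap k r)) * T
      rw [filter_lt_succ k p hks, Finset.sum_insert (by simp)]
      rw [mul_sub, mul_add, Finset.mul_sum, sub_mul, Finset.sum_mul]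
      have hsum : ∀ r ∈ Finset.univ.filter (· < k),
          T * ((1 + c p * c r) * π (Equiv.swap p r))
            = (1 + c k * c r) * π (Equiv.swap k r) * T := by
        intro r hr
        rw [Finset.mem_filter] at hr
        obtain ⟨h1, h2⟩ := hlt_ne r hr.2
        simp only [add_mul, one_mul, mul_add, mul_assoc, hswr r h1 h2, hTksz, hTrz r h1 h2]
      rw [Finset.sum_congr rfl hsum, F3]
      have : T * ((1 + c p * c k) * π (Equiv.swap p k)) = 1 + c k * c p := by
        rw [Equiv.swap_comm p k, ← ht, ← hT]
        simp only [add_mul, one_mul, mul_add, mul_assoc, hTT, hTksz, hTkz, mul_one]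
      rw [this]
      noncomm_ring
    · -- p ≠ k, ks
      rw [Equiv.swap_apply_of_ne_of_ne hpk hpks]
      show T * (x p - ∑ r ∈ Finset.univ.filter (· < p), (1 + c p * c r) * π (Equiv.swap p r))
        = (x p - ∑ r ∈ Finset.univ.filter (· < p), (1 + c p * c r) * π (Equiv.swap p r)) * T
      rw [mul_sub, Finset.mul_sum, sub_mul, Finset.sum_mul, ← (hxw p k ks hks hpk hpks)]
      congr 1
      -- sum reindex
      have hiff : ∀ r : Fin n, r ∈ Finset.univ.filter (· < p) ↔
          t r ∈ Finset.univ.filter (· < p) := by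
        intro r
        simp only [Finset.mem_filter, Finset.mem_univ, true_and, Fin.lt_def]
        have hpk' : (p:ℕ) ≠ k := fun h => hpk (Fin.ext h)
        have hpks' : (p:ℕ) ≠ ks := fun h => hpks (Fin.ext h)
        rcases eq_or_ne r k with rfl | h1
        · rw [ht, Equiv.swap_apply_left]; omega
        · rcases eq_or_ne r ks with rfl | h2
          · rw [ht, Equiv.swap_apply_right]; omega
          · rw [ht, Equiv.swap_apply_of_ne_of_ne h1 h2]
      refine Finset.sum_equiv t hiff ?_
      intro r hr
      rw [Finset.mem_filter] at hr
      have hrp : r ≠ p := ne_of_lt hr.2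
      -- T * ((1 + c p * c r) * π (swap p r)) = (1 + c p * c (t r)) * π (swap p (t r)) * T
      have hsw : T * π (Equiv.swap p r) = π (Equiv.swap p (t r)) * T := by
        rw [hT, ← map_mul, ← map_mul]
        congr 1
        rw [Equiv.mul_swap_eq_swap_mul]
        congr 1
        rw [ht, Equiv.swap_apply_of_ne_of_ne hpk hpks]
      have hcr : T * c r = c (t r) * T := by rw [hT, hwc]
      have hcrz : ∀ z : A, T * (c r * z) = c (t r) * (T * z) := fun z => by
        rw [← mul_assoc, hcr, mul_assoc]
      have hcp : ∀ z : A, T * (c p * z) = c p * (T * z) := hTrz p hpk hpks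
      simp only [add_mul, one_mul, mul_add, mul_assoc, hsw, hcp, hcrz]

lemma yconj {m : ℕ} (π : Equiv.Perm (Fin (m+1)) →* A) (c : Fin (m+1) → A) (x : Fin (m+1) → A)
    (hwc : ∀ (w : Equiv.Perm (Fin (m+1))) (p : Fin (m+1)), π w * c p = c (w p) * π w)
    (hxw : ∀ p q qs : Fin (m+1), (qs : ℕ) = (q : ℕ) + 1 → p ≠ q → p ≠ qs →
      x p * π (Equiv.swap q qs) = π (Equiv.swap q qs) * x p)
    (hxw' : ∀ p ps : Fin (m+1), (ps : ℕ) = (p : ℕ) + 1 →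
      x p * π (Equiv.swap p ps) = π (Equiv.swap p ps) * x ps - 1 - c p * c ps)
    (w : Equiv.Perm (Fin (m+1))) (p : Fin (m+1)) :
    π w * yElt π c x p = yElt π c x (w p) * π w := by
  have hw : w ∈ Submonoid.closure (Set.range fun i : Fin m ↦ Equiv.swap i.castSucc i.succ) := by
    rw [Equiv.Perm.mclosure_swap_castSucc_succ]; trivial
  revert p
  induction hw using Submonoid.closure_induction with
  | mem g hg =>
      obtain ⟨i, rfl⟩ := hg
      intro p
      exact yconj_adj π c x hwc hxw hxw' i.castSucc i.succ (by simp) p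
  | one => intro p; simp
  | mul a b ha hb iha ihb =>
      intro p
      rw [map_mul, mul_assoc, ihb p, ← mul_assoc, iha (b p), mul_assoc]
      rfl

lemma ybase {m : ℕ} (π : Equiv.Perm (Fin (m+2)) →* A) (c : Fin (m+2) → A) (x : Fin (m+2) → A)
    (hc2 : ∀ p, c p * c p = -1)
    (hcc : ∀ p q, p ≠ q → c p * c q = -(c q * c p))
    (hwc : ∀ (w : Equiv.Perm (Fin (m+2))) (p : Fin (m+2)), π w * c p = c (w p) * π w)
    (hxx : ∀ p q, x p * x q = x q * x p)
    (hxw' : ∀ p ps : Fin (m+2), (ps : ℕ) = (p : ℕ) + 1 →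
      x p * π (Equiv.swap p ps) = π (Equiv.swap p ps) * x ps - 1 - c p * c ps)
    (hxc : ∀ p q, p ≠ q → x p * c q = c q * x p)
    (hxc' : ∀ p, x p * c p = -(c p * x p)) :
    π (Equiv.swap 0 1) * (yElt π c x 0 * yElt π c x 1 - yElt π c x 1 * yElt π c x 0)
      = yElt π c x 0 - yElt π c x 1 + c 0 * c 1 * (yElt π c x 0 + yElt π c x 1) := by
  have h01 : ((1 : Fin (m+2)) : ℕ) = ((0 : Fin (m+2)) : ℕ) + 1 := by simp
  have hne01 : (0 : Fin (m+2)) ≠ 1 := by simp [Fin.ext_iff]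
  have y0 : yElt π c x 0 = x 0 := by
    rw [yElt]
    have : Finset.univ.filter (· < (0 : Fin (m+2))) = ∅ := by
      simp [Finset.filter_eq_empty_iff]
    rw [this, Finset.sum_empty, sub_zero]
  have y1 : yElt π c x 1 = x 1 - (1 + c 1 * c 0) * π (Equiv.swap 0 1) := by
    rw [yElt]
    have : Finset.univ.filter (· < (1 : Fin (m+2))) = {0} := by
      ext r
      simp only [Finset.mem_filter, Finset.mem_singleton, Finset.mem_univ, true_and, Fin.lt_def,
        Fin.ext_iff, Fin.val_one, Fin.val_zero]
      omega
    rw [this, Finset.sum_singleton, Equiv.swap_comm 1 0]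
  set S : A := π (Equiv.swap 0 1) with hS
  set a : A := c 0 with ha
  set b : A := c 1 with hb
  set X : A := x 0 with hX
  set Y : A := x 1 with hY
  have hSS : S * S = 1 := by rw [hS, ← map_mul, Equiv.swap_mul_self, map_one]
  have hSSz : ∀ z : A, S * (S * z) = z := fun z => by rw [← mul_assoc, hSS, one_mul]
  have hSa : S * a = b * S := by rw [hS, ha, hb, hwc, Equiv.swap_apply_left]
  have hSb : S * b = a * S := by rw [hS, ha, hb, hwc, Equiv.swap_apply_right]
  have hSaz : ∀ z : A, S * (a * z) = b * (S * z) := fun z => by rw [← mul_assoc, hSa, mul_assoc]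
  have hSbz : ∀ z : A, S * (b * z) = a * (S * z) := fun z => by rw [← mul_assoc, hSb, mul_assoc]
  have hXY : X * Y = Y * X := hxx 0 1
  have hYXz : ∀ z : A, Y * (X * z) = X * (Y * z) := fun z => by
    rw [← mul_assoc, ← hXY, mul_assoc]
  have hXa : X * a = -(a * X) := hxc' 0
  have hXaz : ∀ z : A, X * (a * z) = -(a * (X * z)) := fun z => by
    rw [← mul_assoc, hXa, neg_mul, mul_assoc]
  have hXb : X * b = b * X := hxc 0 1 hne01
  have hXbz : ∀ z : A, X * (b * z) = b * (X * z) := fun z => by rw [← mul_assoc, hXb, mul_assoc]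
  have hYa : Y * a = a * Y := hxc 1 0 hne01.symm
  have hYaz : ∀ z : A, Y * (a * z) = a * (Y * z) := fun z => by rw [← mul_assoc, hYa, mul_assoc]
  have hYb : Y * b = -(b * Y) := hxc' 1
  have hYbz : ∀ z : A, Y * (b * z) = -(b * (Y * z)) := fun z => by
    rw [← mul_assoc, hYb, neg_mul, mul_assoc]
  have hba : b * a = -(a * b) := hcc 1 0 hne01.symm
  have hbaz : ∀ z : A, b * (a * z) = -(a * (b * z)) := fun z => by
    rw [← mul_assoc, hba, neg_mul, mul_assoc]
  have haa : a * a = -1 := hc2 0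
  have haaz : ∀ z : A, a * (a * z) = -z := fun z => by rw [← mul_assoc, haa, neg_one_mul]
  have hbb : b * b = -1 := hc2 1
  have hbbz : ∀ z : A, b * (b * z) = -z := fun z => by rw [← mul_assoc, hbb, neg_one_mul]
  have hXS : X * S = S * Y - 1 - a * b := hxw' 0 1 h01
  have hSY : S * Y = X * S + 1 + a * b := by rw [hXS]; noncomm_ring
  have hSYz : ∀ z : A, S * (Y * z) = X * (S * z) + z + a * (b * z) := fun z => by
    rw [← mul_assoc, hSY]; noncomm_ring
  have hSX : S * X = Y * S - 1 - b * a := by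
    calc S * X = S * (X * S * S) := by rw [mul_assoc, hSS, mul_one]
      _ = S * ((S * Y - 1 - a * b) * S) := by rw [hXS]
      _ = Y * S - 1 - b * a := by
          simp only [sub_mul, mul_sub, one_mul, mul_one, mul_assoc, hSS, hSSz, hSaz, hSbz]
  have hSXz : ∀ z : A, S * (X * z) = Y * (S * z) - z - b * (a * z) := fun z => by
    rw [← mul_assoc, hSX]; noncomm_ring
  rw [y0, y1]
  simp only [mul_sub, sub_mul, mul_add, add_mul, mul_one, one_mul, mul_neg, neg_mul,
    mul_assoc, hSS, hSSz, hSa, hSaz, hSb, hSbz, hXY, hYXz, hXa, hXaz, hXb, hXbz, hYa, hYaz,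
    hYb, hYbz, hba, hbaz, haa, haaz, hbb, hbbz, hSY, hSYz, hSX, hSXz, neg_neg, neg_add]
  abel

/-- In the degenerate affine Sergeev algebra `A_n`, the elements
`y_p = x_p - Σ_{q<p} (1 + c_p c_q) w_{pq}` satisfy
`w_{pq}·[y_p, y_q] = y_p - y_q + c_p c_q (y_p + y_q)` for all `p ≠ q`. -/
theorem yElt_commutation (π : Equiv.Perm (Fin n) →* A) (c : Fin n → A) (x : Fin n → A)
    (hc2 : ∀ p, c p * c p = -1)
    (hcc : ∀ p q, p ≠ q → c p * c q = -(c q * c p))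
    (hwc : ∀ (w : Equiv.Perm (Fin n)) (p : Fin n), π w * c p = c (w p) * π w)
    (hxx : ∀ p q, x p * x q = x q * x p)
    (hxw : ∀ p q qs : Fin n, (qs : ℕ) = (q : ℕ) + 1 → p ≠ q → p ≠ qs →
      x p * π (Equiv.swap q qs) = π (Equiv.swap q qs) * x p)
    (hxw' : ∀ p ps : Fin n, (ps : ℕ) = (p : ℕ) + 1 →
      x p * π (Equiv.swap p ps) = π (Equiv.swap p ps) * x ps - 1 - c p * c ps)
    (hxc : ∀ p q, p ≠ q → x p * c q = c q * x p)
    (hxc' : ∀ p, x p * c p = -(c p * x p))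
    (p q : Fin n) (hpq : p ≠ q) :
    π (Equiv.swap p q) * (yElt π c x p * yElt π c x q - yElt π c x q * yElt π c x p)
      = yElt π c x p - yElt π c x q
        + c p * c q * (yElt π c x p + yElt π c x q) := by
  
  have hn : 2 ≤ n := by
    have h1 : (p : ℕ) ≠ (q : ℕ) := fun h => hpq (Fin.ext h)
    have h2 := p.isLt
    have h3 := q.isLt
    omega
  obtain ⟨m, rfl⟩ : ∃ m, n = m + 2 := ⟨n - 2, by omega⟩
  set w : Equiv.Perm (Fin (m+2)) :=
    Equiv.swap 0 p * Equiv.swap 1 (Equiv.swap 0 p q) with hw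
  have hne01 : (0 : Fin (m+2)) ≠ 1 := by simp [Fin.ext_iff]
  have hq' : Equiv.swap 0 p q ≠ 0 := by
    intro h
    have h2 := congrArg (Equiv.swap 0 p) h
    rw [Equiv.swap_apply_self, Equiv.swap_apply_left] at h2
    exact hpq h2.symm
  have hw0 : w 0 = p := by
    rw [hw, Equiv.Perm.mul_apply,
      Equiv.swap_apply_of_ne_of_ne hne01 (Ne.symm hq'), Equiv.swap_apply_left]
  have hw1 : w 1 = q := by
    rw [hw, Equiv.Perm.mul_apply, Equiv.swap_apply_left, Equiv.swap_apply_self]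
  have hswpq : Equiv.swap p q = w * Equiv.swap 0 1 * w⁻¹ := by
    conv_lhs => rw [← hw0, ← hw1]
    exact Equiv.swap_apply_apply w 0 1
  have hwinv0 : w⁻¹ p = 0 := by rw [← hw0, Equiv.Perm.inv_def, Equiv.symm_apply_apply]
  have hwinv1 : w⁻¹ q = 1 := by rw [← hw1, Equiv.Perm.inv_def, Equiv.symm_apply_apply]
  have hconj := yconj π c x hwc hxw hxw'
  have cw0 : π w * yElt π c x 0 = yElt π c x p * π w := by rw [hconj w 0, hw0]
  have cw1 : π w * yElt π c x 1 = yElt π c x q * π w := by rw [hconj w 1, hw1]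
  have cinvp : π w⁻¹ * yElt π c x p = yElt π c x 0 * π w⁻¹ := by
    rw [hconj w⁻¹ p, hwinv0]
  have cinvq : π w⁻¹ * yElt π c x q = yElt π c x 1 * π w⁻¹ := by
    rw [hconj w⁻¹ q, hwinv1]
  have hwc0 : π w * c 0 = c p * π w := by rw [hwc, hw0]
  have hwc1 : π w * c 1 = c q * π w := by rw [hwc, hw1]
  have hww : π w * π w⁻¹ = 1 := by rw [← map_mul, mul_inv_cancel, map_one]
  set Y0 := yElt π c x 0
  set Y1 := yElt π c x 1
  set Yp := yElt π c x p
  set Yq := yElt π c x q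
  calc π (Equiv.swap p q) * (Yp * Yq - Yq * Yp)
      = π w * (π (Equiv.swap 0 1) * (π w⁻¹ * (Yp * Yq - Yq * Yp))) := by
        rw [hswpq, map_mul, map_mul, mul_assoc, mul_assoc]
    _ = π w * (π (Equiv.swap 0 1) * ((Y0 * Y1 - Y1 * Y0) * π w⁻¹)) := by
        congr 1
        congr 1
        rw [mul_sub, sub_mul]
        congr 1
        · rw [← mul_assoc, cinvp, mul_assoc, cinvq, ← mul_assoc]
        · rw [← mul_assoc, cinvq, mul_assoc, cinvp, ← mul_assoc]
    _ = π w * ((Y0 - Y1 + c 0 * c 1 * (Y0 + Y1)) * π w⁻¹) := by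
        rw [← mul_assoc (π (Equiv.swap 0 1)),
          ybase π c x hc2 hcc hwc hxx hxw' hxc hxc']
    _ = (Yp - Yq + c p * c q * (Yp + Yq)) * (π w * π w⁻¹) := by
        rw [← mul_assoc, ← mul_assoc]
        congr 1
        have hwc0z : ∀ z : A, π w * (c 0 * z) = c p * (π w * z) := fun z => by
          rw [← mul_assoc, hwc0, mul_assoc]
        have hwc1z : ∀ z : A, π w * (c 1 * z) = c q * (π w * z) := fun z => by
          rw [← mul_assoc, hwc1, mul_assoc]
        simp only [mul_sub, mul_add, sub_mul, add_mul, mul_assoc, cw0, cw1, hwc0z, hwc1z]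
    _ = Yp - Yq + c p * c q * (Yp + Yq) := by rw [hww, mul_one]
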